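/- With μ_t as above (k > −1, t ∈ (1/2,2)), for 1/2 < s ≤ t < 2 and x ∈ [0, 1/t), Ψ^{wds}_{μ_v}(x) = ((k+1)/(k+2)) · (v^{k+1}/(1 − (vx)^{k+1})) · (2^{k+1}(2v+1) − x^{k+2}) is non-decreasing in v on [s,t]; in particular Ψ^{wds}_{μ_s}(x) ≤ Ψ^{wds}_{μ_t}(x). -/

import Mathlib

open MeasureTheory Set Filter

noncomputable def meanM (μ : Measure ℝ) : ℝ := ∫ y, y ∂μ

noncomputable def rSupE (μ : Measure ℝ) : EReal :=
  sInf ((fun z : ℝ => (z : EReal)) '' {z : ℝ | μ (Ici z) = 0})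

noncomputable def psiWds (μ : Measure ℝ) (x : ℝ) : EReal :=
  if (x : EReal) < rSupE μ then
    ((((∫ y in Ici x, y ∂μ) - meanM μ) / (μ (Ici x)).toReal : ℝ) : EReal)
  else ⊤

noncomputable def Kfun (μ : Measure ℝ) (x : ℝ) : ℝ :=
  (∫ y in Ici x, (y - x) ∂μ) - meanM μ

noncomputable def alphaK (k t : ℝ) : ℝ :=
  ((k + 1) / (k + 2)) * ((2 * t) ^ (k + 2) * (2 * t + 1)) / (2 - t)

noncomputable def muK (k t : ℝ) : Measure ℝ :=
  MeasureTheory.volume.withDensity (fun y => ENNReal.ofReal (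
    if y ∈ Ico (-(alphaK k t)) 0 then (2 - t) / (2 * alphaK k t)
    else if y ∈ Ico (0 : ℝ) (1 / t) then ((k + 1) * t ^ (k + 2) / 2) * y ^ k
    else 0))

noncomputable def psiFormula (k x v : ℝ) : ℝ :=
  ((k + 1) / (k + 2)) * (v ^ (k + 1) / (1 - (v * x) ^ (k + 1)))
    * (2 ^ (k + 1) * (2 * v + 1) - x ^ (k + 2))

open scoped ENNReal NNReal




noncomputable def densK (k v y : ℝ) : ℝ :=
  if y ∈ Ico (-(alphaK k v)) 0 then (2 - v) / (2 * alphaK k v)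
  else if y ∈ Ico (0 : ℝ) (1 / v) then ((k + 1) * v ^ (k + 2) / 2) * y ^ k
  else 0

lemma alphaK_pos {k v : ℝ} (hk : -1 < k) (hv1 : 1/2 < v) (hv2 : v < 2) :
    0 < alphaK k v := by
  have h2v : (0:ℝ) < 2 * v := by linarith
  have h1 := Real.rpow_pos_of_pos h2v (k + 2)
  have : 0 < ((k + 1) / (k + 2)) * ((2*v) ^ (k + 2) * (2*v + 1)) :=
    mul_pos (div_pos (by linarith) (by linarith)) (mul_pos h1 (by linarith))
  exact div_pos this (by linarith)

lemma densK_meas (k v : ℝ) : Measurable (densK k v) := by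
  unfold densK
  refine Measurable.ite ?_ measurable_const (Measurable.ite ?_ ?_ measurable_const)
  · exact measurableSet_Ico
  · exact measurableSet_Ico
  · exact (measurable_id.pow_const k).const_mul _

lemma densK_nonneg {k v : ℝ} (hk : -1 < k) (hv1 : 1/2 < v) (hv2 : v < 2) (y : ℝ) :
    0 ≤ densK k v y := by
  have hα := alphaK_pos hk hv1 hv2
  unfold densK
  split_ifs with h1 h2
  · exact div_nonneg (by linarith) (by linarith)
  · have hy : (0:ℝ) ≤ y := h2.1
    have h3 : (0:ℝ) ≤ y ^ k := Real.rpow_nonneg hy k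
    have hv0 : (0:ℝ) < v := by linarith
    have h4 : (0:ℝ) < v ^ (k+2) := Real.rpow_pos_of_pos hv0 _
    have hk1 : (0:ℝ) < k + 1 := by linarith
    positivity
  · exact le_refl 0

lemma intOn_rpow {r a b : ℝ} (hr : -1 < r) (hab : a ≤ b) :
    IntegrableOn (fun y : ℝ => y ^ r) (Ioc a b) volume :=
  (intervalIntegrable_iff_integrableOn_Ioc_of_le hab).1 (intervalIntegral.intervalIntegrable_rpow' hr)

lemma integ_rpow_Ioc {r a b : ℝ} (hr : -1 < r) (hab : a ≤ b) :
    ∫ y in Ioc a b, y ^ r = (b ^ (r+1) - a ^ (r+1)) / (r+1) := by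
  rw [← intervalIntegral.integral_of_le hab, integral_rpow (Or.inl hr)]

lemma densK_on_Ici {k v a y : ℝ} (ha : 0 ≤ a) (hy : a ≤ y) :
    densK k v y = (Ico a (1/v)).indicator (fun y => ((k+1) * v ^ (k+2) / 2) * y ^ k) y := by
  have hy0 : (0:ℝ) ≤ y := le_trans ha hy
  unfold densK
  have hne : y ∉ Ico (-(alphaK k v)) 0 := fun h => absurd h.2 (not_lt.2 hy0)
  by_cases hB : y < 1/v
  · rw [if_neg hne, if_pos (mem_Ico.mpr ⟨hy0, hB⟩), indicator_of_mem (mem_Ico.mpr ⟨hy, hB⟩)]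
  · rw [if_neg hne, if_neg (fun h => hB (mem_Ico.mp h).2),
      indicator_of_notMem (fun h => hB (mem_Ico.mp h).2)]



lemma muK_eq (k v : ℝ) :
    muK k v = MeasureTheory.volume.withDensity (fun y => ENNReal.ofReal (densK k v y)) := rfl

lemma intOn_cm_rpow {k c a b : ℝ} (hk : -1 < k) (hab : a ≤ b) :
    IntegrableOn (fun y : ℝ => c * y ^ k) (Ioc a b) volume :=
  (intOn_rpow hk hab).const_mul c

lemma muK_Ici_raw {k v : ℝ} (hk : -1 < k) (hv1 : 1/2 < v) (hv2 : v < 2)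
    {a : ℝ} (ha : 0 ≤ a) (hab : a ≤ 1/v) :
    muK k v (Ici a) = ENNReal.ofReal
      (((k+1) * v ^ (k+2) / 2) * (((1/v) ^ (k+1) - a ^ (k+1)) / (k+1))) := by
  rw [muK_eq, withDensity_apply _ measurableSet_Ici]
  rw [setLIntegral_congr_fun measurableSet_Ici
    (fun y hy => by
      rw [densK_on_Ici ha (hy : a ≤ y)])]
  have hmemf : ∀ y : ℝ, ENNReal.ofReal ((Ico a (1/v)).indicator
      (fun y => ((k+1) * v ^ (k+2) / 2) * y ^ k) y)
      = (Ico a (1/v)).indicator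
      (fun y => ENNReal.ofReal (((k+1) * v ^ (k+2) / 2) * y ^ k)) y := by
    intro y
    by_cases h : y ∈ Ico a (1/v)
    · rw [indicator_of_mem h, indicator_of_mem h]
    · rw [indicator_of_notMem h, indicator_of_notMem h, ENNReal.ofReal_zero]
  simp_rw [hmemf]
  rw [setLIntegral_indicator measurableSet_Ico _]
  rw [inter_eq_left.mpr Ico_subset_Ici_self]
  rw [setLIntegral_congr Ico_ae_eq_Ioc]
  rw [← ofReal_integral_eq_lintegral_ofReal (intOn_cm_rpow hk hab)]
  · rw [integral_const_mul, integ_rpow_Ioc hk hab]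
  · filter_upwards [self_mem_ae_restrict measurableSet_Ioc] with y hy
    have hy0 : (0:ℝ) < y := lt_of_le_of_lt ha (by exact hy.1)
    have hv0 : (0:ℝ) < v := by linarith
    have : (0:ℝ) ≤ y ^ k := Real.rpow_nonneg hy0.le k
    have hk1 : (0:ℝ) < k + 1 := by linarith
    have hvp : (0:ℝ) < v ^ (k+2) := Real.rpow_pos_of_pos hv0 _
    positivity

lemma int_y_Ici {k v : ℝ} (hk : -1 < k) (hv1 : 1/2 < v) (hv2 : v < 2)
    {a : ℝ} (ha : 0 ≤ a) (hab : a ≤ 1/v) :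
    ∫ y in Ici a, y ∂(muK k v)
      = ((k+1) * v ^ (k+2) / 2) * (((1/v) ^ (k+2) - a ^ (k+2)) / (k+2)) := by
  rw [muK_eq, restrict_withDensity measurableSet_Ici]
  rw [show (fun y : ℝ => ENNReal.ofReal (densK k v y))
      = (fun y : ℝ => ((densK k v y).toNNReal : ℝ≥0∞)) from rfl]
  rw [integral_withDensity_eq_integral_smul ((densK_meas k v).real_toNNReal) (fun y : ℝ => y)]
  have hcong : ∀ y ∈ Ici a, (densK k v y).toNNReal • y
      = (Ico a (1/v)).indicator (fun y => ((k+1) * v ^ (k+2) / 2) * y ^ k * y) y := by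
    intro y hy
    have h1 : (densK k v y).toNNReal • y = densK k v y * y := by
      rw [NNReal.smul_def, Real.coe_toNNReal _ (densK_nonneg hk hv1 hv2 y), smul_eq_mul]
    rw [h1, densK_on_Ici ha (hy : a ≤ y)]
    by_cases h : y ∈ Ico a (1/v)
    · rw [indicator_of_mem h, indicator_of_mem h]
    · rw [indicator_of_notMem h, indicator_of_notMem h, zero_mul]
  rw [setIntegral_congr_fun measurableSet_Ici hcong]
  rw [setIntegral_indicator measurableSet_Ico,
    inter_eq_right.mpr Ico_subset_Ici_self,
    Measure.restrict_congr_set Ico_ae_eq_Ioc]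
  have hk1 : (-1:ℝ) < k + 1 := by linarith
  rw [setIntegral_congr_fun measurableSet_Ioc (fun y hy => by
    have hy' := mem_Ioc.mp hy
    have hy0 : y ≠ 0 := (lt_of_le_of_lt ha hy'.1).ne'
    show ((k+1) * v ^ (k+2) / 2) * y ^ k * y = ((k+1) * v ^ (k+2) / 2) * y ^ (k+1)
    rw [Real.rpow_add_one hy0, mul_assoc])]
  rw [integral_const_mul, integ_rpow_Ioc hk1 hab, show k + 1 + 1 = k + 2 by ring]



lemma meanM_muK {k v : ℝ} (hk : -1 < k) (hv1 : 1/2 < v) (hv2 : v < 2) :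
    meanM (muK k v) = ((k+1) * v ^ (k+2) / 2) * ((1/v) ^ (k+2) / (k+2))
      - ((k+1) / (k+2)) * ((2*v) ^ (k+2) * (2*v+1)) / 4 := by
  have hα := alphaK_pos hk hv1 hv2
  have hv0 : (0:ℝ) < v := by linarith
  have hB0 : (0:ℝ) ≤ 1/v := by positivity
  have hk1 : (-1:ℝ) < k + 1 := by linarith
  unfold meanM
  rw [muK_eq]
  rw [show (fun y : ℝ => ENNReal.ofReal (densK k v y))
      = (fun y : ℝ => ((densK k v y).toNNReal : ℝ≥0∞)) from rfl]
  rw [integral_withDensity_eq_integral_smul ((densK_meas k v).real_toNNReal) (fun y : ℝ => y)]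
  have hdecomp : (fun y : ℝ => (densK k v y).toNNReal • y)
      = (fun y => (Ico (-(alphaK k v)) 0).indicator (fun y => ((2-v) / (2 * alphaK k v)) * y) y
        + (Ico (0:ℝ) (1/v)).indicator (fun y => ((k+1) * v ^ (k+2) / 2) * y ^ k * y) y) := by
    funext y
    rw [NNReal.smul_def, Real.coe_toNNReal _ (densK_nonneg hk hv1 hv2 y), smul_eq_mul]
    unfold densK
    by_cases h1 : y ∈ Ico (-(alphaK k v)) 0
    · have h2 : y ∉ Ico (0:ℝ) (1/v) := fun h =>
        absurd (mem_Ico.mp h).1 (not_le.2 (mem_Ico.mp h1).2)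
      rw [if_pos h1, indicator_of_mem h1, indicator_of_notMem h2, add_zero]
    · by_cases h2 : y ∈ Ico (0:ℝ) (1/v)
      · rw [if_neg h1, if_pos h2, indicator_of_notMem h1, indicator_of_mem h2, zero_add]
      · rw [if_neg h1, if_neg h2, indicator_of_notMem h1, indicator_of_notMem h2,
          add_zero, zero_mul]
  rw [hdecomp]
  have hi1 : Integrable ((Ico (-(alphaK k v)) 0).indicator
      (fun y => ((2-v) / (2 * alphaK k v)) * y)) volume := by
    rw [integrable_indicator_iff measurableSet_Ico]
    exact ((continuous_const.mul continuous_id).integrableOn_Icc).mono_set Ico_subset_Icc_self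
  have hioc : IntegrableOn (fun y : ℝ => ((k+1) * v ^ (k+2) / 2) * y ^ k * y)
      (Ioc (0:ℝ) (1/v)) volume := by
    refine (intOn_cm_rpow (c := (k+1) * v ^ (k+2) / 2) hk1 hB0).congr_fun (fun y hy => ?_) measurableSet_Ioc
    have hy' := mem_Ioc.mp hy
    show ((k+1) * v ^ (k+2) / 2) * y ^ (k+1) = ((k+1) * v ^ (k+2) / 2) * y ^ k * y
    rw [Real.rpow_add_one hy'.1.ne', mul_assoc]
  have hi2 : Integrable ((Ico (0:ℝ) (1/v)).indicator
      (fun y => ((k+1) * v ^ (k+2) / 2) * y ^ k * y)) volume := by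
    rw [integrable_indicator_iff measurableSet_Ico]
    exact hioc.congr_set_ae Ico_ae_eq_Ioc
  rw [integral_add hi1 hi2, integral_indicator measurableSet_Ico,
    integral_indicator measurableSet_Ico]
  have hpart1 : ∫ y in Ico (-(alphaK k v)) 0, ((2-v) / (2 * alphaK k v)) * y
      = ((2-v) / (2 * alphaK k v)) * ((0^2 - (-(alphaK k v))^2) / 2) := by
    rw [integral_const_mul, Measure.restrict_congr_set Ico_ae_eq_Ioc,
      ← intervalIntegral.integral_of_le (by linarith : -(alphaK k v) ≤ 0),
      integral_id]
  have hpart2 : ∫ y in Ico (0:ℝ) (1/v), ((k+1) * v ^ (k+2) / 2) * y ^ k * y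
      = ((k+1) * v ^ (k+2) / 2) * (((1/v) ^ (k+2) - (0:ℝ) ^ (k+2)) / (k+2)) := by
    rw [Measure.restrict_congr_set Ico_ae_eq_Ioc]
    rw [setIntegral_congr_fun measurableSet_Ioc (fun y hy => by
      have hy' := mem_Ioc.mp hy
      show ((k+1) * v ^ (k+2) / 2) * y ^ k * y = ((k+1) * v ^ (k+2) / 2) * y ^ (k+1)
      rw [Real.rpow_add_one hy'.1.ne', mul_assoc])]
    rw [integral_const_mul, integ_rpow_Ioc hk1 hB0, show k + 1 + 1 = k + 2 by ring]
  rw [hpart1, hpart2]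
  have hz : (0:ℝ) ^ (k+2) = 0 := Real.zero_rpow (by linarith)
  have h2vne : (2:ℝ) - v ≠ 0 := by linarith
  have hk2 : (0:ℝ) < k + 2 := by linarith
  rw [hz, show ((2-v) / (2 * alphaK k v)) * (((0:ℝ)^2 - (-(alphaK k v))^2) / 2)
      = -((2-v) * alphaK k v) / 4 from by field_simp [hα.ne']; ring]
  unfold alphaK
  field_simp
  ring







lemma lt_rSupE {k v x : ℝ} (hk : -1 < k) (hv1 : 1/2 < v) (hv2 : v < 2)
    (hx0 : 0 ≤ x) (hx : x < 1/v) : (x : EReal) < rSupE (muK k v) := by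
  have hv0 : (0:ℝ) < v := by linarith
  have hB0 : (0:ℝ) < 1/v := by positivity
  refine lt_of_lt_of_le (EReal.coe_lt_coe_iff.mpr hx) (le_sInf ?_)
  rintro e ⟨z, hz, rfl⟩
  rw [EReal.coe_le_coe_iff]
  by_contra h
  push_neg at h
  set a := max z 0 with ha_def
  have ha0 : 0 ≤ a := le_max_right _ _
  have haB : a < 1/v := max_lt h hB0
  have hsub : Ici a ⊆ Ici z := Ici_subset_Ici.mpr (le_max_left _ _)
  have hmass := muK_Ici_raw hk hv1 hv2 ha0 haB.le
  have hpos : 0 < ((k+1) * v ^ (k+2) / 2) * (((1/v) ^ (k+1) - a ^ (k+1)) / (k+1)) := by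
    have h1 : a ^ (k+1) < (1/v) ^ (k+1) := Real.rpow_lt_rpow ha0 haB (by linarith)
    have h2 : (0:ℝ) < v ^ (k+2) := Real.rpow_pos_of_pos hv0 _
    have hk1 : (0:ℝ) < k + 1 := by linarith
    have h3 : (0:ℝ) < (k+1) * v ^ (k+2) / 2 := by positivity
    exact mul_pos h3 (div_pos (by linarith) hk1)
  have : (0:ℝ≥0∞) < muK k v (Ici a) := by
    rw [hmass]; exact ENNReal.ofReal_pos.mpr hpos
  have hle : muK k v (Ici a) ≤ muK k v (Ici z) := measure_mono hsub
  rw [show muK k v (Ici z) = 0 from hz] at hle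
  exact absurd (le_antisymm hle zero_le) (ne_of_gt this)

set_option maxHeartbeats 2000000 in
lemma psiWds_muK {k v x : ℝ} (hk : -1 < k) (hv1 : 1/2 < v) (hv2 : v < 2)
    (hx0 : 0 ≤ x) (hx : x < 1/v) :
    psiWds (muK k v) x = ((psiFormula k x v : ℝ) : EReal) := by
  have hv0 : (0:ℝ) < v := by linarith
  have hk1 : (0:ℝ) < k + 1 := by linarith
  have hk2 : (0:ℝ) < k + 2 := by linarith
  have hα : 0 < alphaK k v := alphaK_pos hk hv1 hv2
  have hP : (0:ℝ) < v ^ (k+1) := Real.rpow_pos_of_pos hv0 _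
  have hQlt : x ^ (k+1) < (1/v) ^ (k+1) := Real.rpow_lt_rpow hx0 hx hk1
  have hI1pos : 0 < ((k+1) * v ^ (k+2) / 2) * (((1/v) ^ (k+1) - x ^ (k+1)) / (k+1)) := by
    have h2 : (0:ℝ) < v ^ (k+2) := Real.rpow_pos_of_pos hv0 _
    have h3 : (0:ℝ) < (k+1) * v ^ (k+2) / 2 := by positivity
    exact mul_pos h3 (div_pos (by linarith) hk1)
  unfold psiWds
  rw [if_pos (lt_rSupE hk hv1 hv2 hx0 hx)]
  congr 1
  rw [int_y_Ici hk hv1 hv2 hx0 hx.le, meanM_muK hk hv1 hv2,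
    muK_Ici_raw hk hv1 hv2 hx0 hx.le, ENNReal.toReal_ofReal hI1pos.le,
    div_eq_iff (ne_of_gt hI1pos)]
  have hvx1 : v * x < 1 := by
    have := mul_lt_mul_of_pos_left hx hv0
    rwa [mul_one_div, div_self hv0.ne'] at this
  have hPQ : v ^ (k+1) * x ^ (k+1) < 1 := by
    rw [← Real.mul_rpow hv0.le hx0]
    exact Real.rpow_lt_one (by positivity) hvx1 hk1
  have hBk1 : (1/v) ^ (k+1) = (v ^ (k+1))⁻¹ := by
    rw [one_div, Real.inv_rpow hv0.le]
  have h2v : (2*v) ^ (k+2) = (2 ^ (k+1) * 2) * (v ^ (k+1) * v) := by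
    rw [Real.mul_rpow (by norm_num) hv0.le, show k+2 = k+1+1 by ring,
      Real.rpow_add_one (two_ne_zero), Real.rpow_add_one hv0.ne']
  have hvk2 : v ^ (k+2) = v ^ (k+1) * v := by
    rw [show k+2 = k+1+1 by ring, Real.rpow_add_one hv0.ne']
  have hvx : (v*x) ^ (k+1) = v ^ (k+1) * x ^ (k+1) := Real.mul_rpow hv0.le hx0
  have hBk2 : (1/v) ^ (k+2) = (v ^ (k+1))⁻¹ * v⁻¹ := by
    rw [one_div, show k+2 = k+1+1 by ring, Real.rpow_add_one (inv_ne_zero hv0.ne'),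
      Real.inv_rpow hv0.le]
  unfold psiFormula
  rw [hBk2, hBk1, h2v, hvk2, hvx]
  have hne1 : 1 - v ^ (k+1) * x ^ (k+1) ≠ 0 := by linarith
  have h2A : (0:ℝ) < (2:ℝ) ^ (k+1) := Real.rpow_pos_of_pos (by norm_num) _
  set A := (2:ℝ) ^ (k+1) with hA
  set P := v ^ (k+1) with hPdef
  set Q := x ^ (k+1) with hQdef
  set R := x ^ (k+2) with hRdef
  field_simp [hP.ne', h2A.ne', hv0.ne', hk1.ne', hk2.ne', hne1,
    (show (2:ℝ) - v ≠ 0 by linarith), (show (2:ℝ) * v + 1 ≠ 0 by linarith)]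
  ring

lemma psiFormula_mono {k x : ℝ} (hk : -1 < k) (hx0 : 0 ≤ x)
    {v w : ℝ} (hv1 : 1/2 < v) (hvw : v ≤ w) (hw2 : w < 2) (hxw : x < 1/w) :
    psiFormula k x v ≤ psiFormula k x w := by
  have hv0 : (0:ℝ) < v := by linarith
  have hw0 : (0:ℝ) < w := by linarith
  have hk1 : (0:ℝ) < k + 1 := by linarith
  have hk2 : (0:ℝ) < k + 2 := by linarith
  have hwx1 : w * x < 1 := by
    have := mul_lt_mul_of_pos_left hxw hw0
    rwa [mul_one_div, div_self hw0.ne'] at this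
  have hvx1 : v * x ≤ w * x := mul_le_mul_of_nonneg_right hvw hx0
  have h1 : v ^ (k+1) ≤ w ^ (k+1) := Real.rpow_le_rpow hv0.le hvw hk1.le
  have h2 : (v*x) ^ (k+1) ≤ (w*x) ^ (k+1) :=
    Real.rpow_le_rpow (by positivity) hvx1 hk1.le
  have h3 : (w*x) ^ (k+1) < 1 := Real.rpow_lt_one (by positivity) hwx1 hk1
  have hdw : 0 < 1 - (w*x) ^ (k+1) := by linarith
  have hdv : 0 < 1 - (v*x) ^ (k+1) := by linarith
  have hmid : v ^ (k+1) / (1 - (v*x) ^ (k+1)) ≤ w ^ (k+1) / (1 - (w*x) ^ (k+1)) := by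
    apply div_le_div₀ (Real.rpow_nonneg hw0.le _) h1 hdw
    linarith
  have hA : (0:ℝ) < (2:ℝ) ^ (k+1) := Real.rpow_pos_of_pos (by norm_num) _
  have hx2 : x < 2 := by
    have : 1/w < 2 := by
      rw [div_lt_iff₀ hw0]; linarith
    linarith
  have hR : x ^ (k+2) < 2 ^ (k+1) * 2 := by
    have := Real.rpow_lt_rpow hx0 hx2 hk2
    rwa [show (2:ℝ) ^ (k+2) = 2 ^ (k+1) * 2 from by
      rw [show k+2 = k+1+1 by ring, Real.rpow_add_one (two_ne_zero)]] at this
  have hDv : (0:ℝ) ≤ 2 ^ (k+1) * (2*v+1) - x ^ (k+2) := by nlinarith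
  have hDle : 2 ^ (k+1) * (2*v+1) - x ^ (k+2) ≤ 2 ^ (k+1) * (2*w+1) - x ^ (k+2) := by
    nlinarith
  unfold psiFormula
  have hmidnn : 0 ≤ v ^ (k+1) / (1 - (v*x) ^ (k+1)) :=
    div_nonneg (Real.rpow_nonneg hv0.le _) hdv.le
  have hC : (0:ℝ) ≤ (k+1)/(k+2) := by positivity
  have := mul_le_mul hmid hDle hDv (div_nonneg (Real.rpow_nonneg hw0.le _) hdw.le)
  calc ((k+1)/(k+2)) * (v ^ (k+1) / (1 - (v*x) ^ (k+1))) * (2 ^ (k+1) * (2*v+1) - x ^ (k+2))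
      = ((k+1)/(k+2)) * ((v ^ (k+1) / (1 - (v*x) ^ (k+1))) * (2 ^ (k+1) * (2*v+1) - x ^ (k+2))) := by ring
    _ ≤ ((k+1)/(k+2)) * ((w ^ (k+1) / (1 - (w*x) ^ (k+1))) * (2 ^ (k+1) * (2*w+1) - x ^ (k+2))) :=
        mul_le_mul_of_nonneg_left this hC
    _ = ((k+1)/(k+2)) * (w ^ (k+1) / (1 - (w*x) ^ (k+1))) * (2 ^ (k+1) * (2*w+1) - x ^ (k+2)) := by ring

theorem stmt18 (k : ℝ) (hk : -1 < k) (s t x : ℝ)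
    (hs : 1/2 < s) (hst : s ≤ t) (ht : t < 2)
    (hx0 : 0 ≤ x) (hx : x < 1 / t) :
    (∀ v ∈ Icc s t, psiWds (muK k v) x = ((psiFormula k x v : ℝ) : EReal)) ∧
    (∀ v ∈ Icc s t, ∀ w ∈ Icc s t, v ≤ w → psiFormula k x v ≤ psiFormula k x w) ∧
    psiWds (muK k s) x ≤ psiWds (muK k t) x := by
  have ht0 : (0:ℝ) < t := by linarith
  have hxv : ∀ v ∈ Icc s t, x < 1/v := by
    intro v hv
    have hv0 : (0:ℝ) < v := by have := hv.1; linarith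
    exact lt_of_lt_of_le hx (one_div_le_one_div_of_le hv0 hv.2)
  have h1 : ∀ v ∈ Icc s t, psiWds (muK k v) x = ((psiFormula k x v : ℝ) : EReal) := by
    intro v hv
    exact psiWds_muK hk (lt_of_lt_of_le hs hv.1) (lt_of_le_of_lt hv.2 ht) hx0 (hxv v hv)
  have h2 : ∀ v ∈ Icc s t, ∀ w ∈ Icc s t, v ≤ w → psiFormula k x v ≤ psiFormula k x w := by
    intro v hv w hw hvw
    exact psiFormula_mono hk hx0 (lt_of_lt_of_le hs hv.1) hvw (lt_of_le_of_lt hw.2 ht)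
      (hxv w hw)
  refine ⟨h1, h2, ?_⟩
  have hsI : s ∈ Icc s t := ⟨le_refl s, hst⟩
  have htI : t ∈ Icc s t := ⟨hst, le_refl t⟩
  rw [h1 s hsI, h1 t htI, EReal.coe_le_coe_iff]
  exact h2 s hsI t htI hst
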